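/- The set of odd positive integers that are not fibbinary equals the set { q + (2k-1) · 2^{L(q)} : k ≥ 1, q an odd fibbinary number }, and the complement of the odd fibbinary numbers in the odd positive integers is the disjoint union over k ≥ 1 of the sets Ψ_k = { q + (2k-1) · 2^{L(q)} : q odd fibbinary }. -/

import Mathlib

/-- A natural number is fibbinary if its binary representation has no two consecutive 1 bits. -/
def Fibbinary (m : ℕ) : Prop := ∀ i : ℕ, ¬(m.testBit i ∧ m.testBit (i + 1))

/-- For `k ≥ 1`, `Ψ_k = { q + (2k-1)·2^{L(q)} : q odd fibbinary }`. -/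
def Psi (k : ℕ) : Set ℕ :=
  {m : ℕ | ∃ q : ℕ, Odd q ∧ Fibbinary q ∧ m = q + (2 * k - 1) * 2 ^ Nat.size q}

lemma decomp_mod (q r : ℕ) :
    (q + r * 2 ^ Nat.size q) % 2 ^ Nat.size q = q ∧
    (q + r * 2 ^ Nat.size q) / 2 ^ Nat.size q = r := by
  have hlt : q < 2 ^ Nat.size q := Nat.lt_size_self q
  constructor
  · rw [Nat.add_mul_mod_self_right, Nat.mod_eq_of_lt hlt]
  · rw [Nat.add_mul_div_right _ _ (Nat.pow_pos (by norm_num)),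
      Nat.div_eq_of_lt hlt, Nat.zero_add]

lemma testBit_low {q r j : ℕ} (hj : j < Nat.size q) :
    (q + r * 2 ^ Nat.size q).testBit j = q.testBit j := by
  have h := (decomp_mod q r).1
  have h2 := Nat.testBit_mod_two_pow (q + r * 2 ^ Nat.size q) (Nat.size q) j
  rw [h] at h2
  rw [h2]
  simp [hj]

/-- bits (size q - 1, size q) of m = q + r·2^(size q) are both set, for odd q, odd r. -/
lemma key_pair {q r : ℕ} (hq : Odd q) (hr : Odd r) :
    (q + r * 2 ^ Nat.size q).testBit (Nat.size q - 1) ∧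
    (q + r * 2 ^ Nat.size q).testBit (Nat.size q) := by
  have hq0 : 0 < q := hq.pos
  have hs : 0 < Nat.size q := Nat.size_pos.2 hq0
  have hle : 2 ^ (Nat.size q - 1) ≤ q := Nat.lt_size.1 (by omega)
  have hlt : q < 2 ^ Nat.size q := Nat.lt_size_self q
  have h2 : 2 ^ Nat.size q = 2 ^ (Nat.size q - 1) * 2 := by
    rw [← pow_succ]; congr 1; omega
  constructor
  · rw [testBit_low (by omega), Nat.testBit_eq_decide_div_mod_eq]
    have h1 : q / 2 ^ (Nat.size q - 1) = 1 := by
      apply Nat.div_eq_of_lt_le <;> omega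
    simp [h1]
  · rw [Nat.testBit_eq_decide_div_mod_eq, (decomp_mod q r).2]
    simpa [Nat.odd_iff] using hr

/-- No pair of consecutive set bits strictly below size q. -/
lemma no_low_pair {q r j : ℕ} (hfib : Fibbinary q) (hj : j + 1 < Nat.size q) :
    ¬((q + r * 2 ^ Nat.size q).testBit j ∧ (q + r * 2 ^ Nat.size q).testBit (j + 1)) := by
  rw [testBit_low (by omega), testBit_low (by omega)]
  exact hfib j

lemma mem_psi_size {m k : ℕ} (hk : 1 ≤ k) (hm : m ∈ Psi k) :
    ∃ s : ℕ, 0 < s ∧ (m.testBit (s - 1) ∧ m.testBit s) ∧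
      (∀ j, j + 1 < s → ¬(m.testBit j ∧ m.testBit (j + 1))) ∧
      m / 2 ^ s = 2 * k - 1 := by
  obtain ⟨q, hq, hfib, rfl⟩ := hm
  have hr : Odd (2 * k - 1) := by
    refine ⟨k - 1, by omega⟩
  exact ⟨Nat.size q, Nat.size_pos.2 hq.pos, key_pair hq hr,
    fun j hj => no_low_pair hfib hj, (decomp_mod q _).2⟩

lemma size_unique {m s₁ s₂ : ℕ} (h1 : 0 < s₁) (h2 : 0 < s₂)
    (hp1 : m.testBit (s₁ - 1) ∧ m.testBit s₁)
    (hp2 : m.testBit (s₂ - 1) ∧ m.testBit s₂)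
    (hn1 : ∀ j, j + 1 < s₁ → ¬(m.testBit j ∧ m.testBit (j + 1)))
    (hn2 : ∀ j, j + 1 < s₂ → ¬(m.testBit j ∧ m.testBit (j + 1))) : s₁ = s₂ := by
  by_contra hne
  rcases Nat.lt_or_ge s₁ s₂ with h | h
  · exact hn2 (s₁ - 1) (by omega) (by rwa [show s₁ - 1 + 1 = s₁ by omega])
  · have : s₂ < s₁ := by omega
    exact hn1 (s₂ - 1) (by omega) (by rwa [show s₂ - 1 + 1 = s₂ by omega])

theorem odd_nonfibbinary_partition :
    {m : ℕ | 0 < m ∧ Odd m ∧ ¬ Fibbinary m} = ⋃ k ∈ Set.Ici 1, Psi k ∧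
    ∀ k₁ ∈ Set.Ici 1, ∀ k₂ ∈ Set.Ici 1, k₁ ≠ k₂ → Disjoint (Psi k₁) (Psi k₂) := by
  constructor
  · ext m
    simp only [Set.mem_setOf_eq, Set.mem_iUnion, Set.mem_Ici, exists_prop]
    constructor
    · rintro ⟨hm0, hmodd, hnf⟩
      -- find the least index with consecutive bits
      have hex : ∃ i, m.testBit i ∧ m.testBit (i + 1) := by
        by_contra h
        exact hnf fun i hi => h ⟨i, hi⟩
      classical
      set i := Nat.find hex with hi
      obtain ⟨hbi, hbi1⟩ := Nat.find_spec hex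
      set s := i + 1 with hsdef
      set q := m % 2 ^ s with hqdef
      set r := m / 2 ^ s with hrdef
      have hqlt : q < 2 ^ s := Nat.mod_lt _ (by positivity)
      have hqbit : q.testBit i := by
        rw [hqdef, Nat.testBit_mod_two_pow]
        simp [hsdef, hbi, hi]
      have hqle : 2 ^ i ≤ q := Nat.ge_two_pow_of_testBit hqbit
      have hsize : Nat.size q = s := by
        have h1 : Nat.size q ≤ s := Nat.size_le.2 hqlt
        have h2 : i < Nat.size q := Nat.lt_size.2 hqle
        omega
      have hqodd : Odd q := by
        rw [Nat.odd_iff] at hmodd ⊢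
        rw [hqdef, Nat.mod_mod_of_dvd _ (dvd_pow_self 2 (by omega))]
        exact hmodd
      have hqfib : Fibbinary q := by
        intro j hj
        rcases Nat.lt_or_ge (j + 1) s with h | h
        · have hj' : j < i := by omega
          apply Nat.find_min hex hj'
          obtain ⟨ha, hb⟩ := hj
          rw [hqdef, Nat.testBit_mod_two_pow] at ha hb
          constructor
          · simpa using (Bool.and_eq_true _ _ ▸ ha).2
          · simpa using (Bool.and_eq_true _ _ ▸ hb).2
        · exact absurd hj.2 (by
            rw [hqdef, Nat.testBit_mod_two_pow]; simp; omega)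
      have hrodd : Odd r := by
        rw [Nat.odd_iff]
        have := hbi1
        rw [Nat.testBit_eq_decide_div_mod_eq] at this
        simpa [hrdef, hsdef] using this
      obtain ⟨t, ht⟩ := hrodd
      refine ⟨t + 1, by omega, q, hqodd, hqfib, ?_⟩
      have hr' : 2 * (t + 1) - 1 = r := by omega
      rw [hsize, hr', hqdef, hrdef]
      exact (Nat.mod_add_div' m (2 ^ s)).symm
    · rintro ⟨k, hk, q, hq, hfib, rfl⟩
      have hr : Odd (2 * k - 1) := ⟨k - 1, by omega⟩
      have hpair := key_pair hq hr
      have hs : 0 < Nat.size q := Nat.size_pos.2 hq.pos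
      refine ⟨Nat.lt_of_lt_of_le hq.pos (Nat.le_add_right _ _), ?_, ?_⟩
      · have h2 : (2:ℕ) ∣ (2 * k - 1) * 2 ^ Nat.size q :=
          Dvd.dvd.mul_left (dvd_pow_self 2 (by omega)) _
        obtain ⟨c, hc⟩ := h2
        rw [Nat.odd_iff] at hq ⊢
        rw [hc]
        omega
      · intro hfibm
        exact hfibm (Nat.size q - 1) (by rwa [show Nat.size q - 1 + 1 = Nat.size q by omega])
  · intro k₁ hk₁ k₂ hk₂ hne
    rw [Set.disjoint_left]
    rintro m hm1 hm2
    simp only [Set.mem_Ici] at hk₁ hk₂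
    obtain ⟨s₁, hs₁, hp₁, hn₁, hd₁⟩ := mem_psi_size hk₁ hm1
    obtain ⟨s₂, hs₂, hp₂, hn₂, hd₂⟩ := mem_psi_size hk₂ hm2
    have : s₁ = s₂ := size_unique hs₁ hs₂ hp₁ hp₂ hn₁ hn₂
    subst this
    rw [hd₁] at hd₂
    omega
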